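/- Let H be a real Hilbert space, let A be a maximally monotone set-valued operator on H with resolvent J_A (so that for every w ∈ H, w − J_A(w) ∈ A(J_A(w))), let (y_k)_{k ≥ −1} be an arbitrary sequence in H, let x_0 ∈ H, and define (x_k) by x_{k+1} = J_A(x_k − y_k) − (y_k − y_{k−1}) for all k ≥ 0. Then for every x ∈ H and every y with −y ∈ A(x), and every k ≥ 0: ‖(x_{k+1} + y_k) − (x + y)‖² ≤ ‖(x_k + y_{k−1}) − (x + y)‖² − 2⟪y_k − y, x_k − x⟫ + 4⟪y_k − y_{k−1}, x_k − x_{k+1}⟫ − ‖x_{k+1} − x_k‖² − 3‖y_k − y_{k−1}‖². -/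
import Mathlib


open scoped RealInnerProductSpace
open Filter

/-- A set-valued operator `A ⊆ H × H` is monotone if
`⟪u − v, x − y⟫ ≥ 0` for all `(x,u), (y,v) ∈ A`. -/
def IsMonotoneOp {H : Type*} [NormedAddCommGroup H] [InnerProductSpace ℝ H]
    (A : Set (H × H)) : Prop :=
  ∀ p ∈ A, ∀ q ∈ A, (0 : ℝ) ≤ ⟪p.2 - q.2, p.1 - q.1⟫

/-- A set-valued operator is maximally monotone if it is monotone and every
monotonically related pair belongs to it. -/
def IsMaximalMonotoneOp {H : Type*} [NormedAddCommGroup H] [InnerProductSpace ℝ H]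
    (A : Set (H × H)) : Prop :=
  IsMonotoneOp A ∧
    ∀ p : H × H, (∀ q ∈ A, (0 : ℝ) ≤ ⟪p.2 - q.2, p.1 - q.1⟫) → p ∈ A

/-- Lemma 3.1 (Lemma `lemma:abs`) of the paper: the abstract one-step estimate for
the recursion `x_{k+1} = J_A(x_k − y_k) − (y_k − y_{k−1})`. -/
theorem statement0
    {H : Type*} [NormedAddCommGroup H] [InnerProductSpace ℝ H] [CompleteSpace H]
    (A : Set (H × H)) (hA : IsMaximalMonotoneOp A)
    (JA : H → H) (hJ : ∀ w : H, (JA w, w - JA w) ∈ A)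
    (x y : ℤ → H)
    (hrec : ∀ k : ℤ, 0 ≤ k → x (k + 1) = JA (x k - y k) - (y k - y (k - 1)))
    (p q : H) (hpq : (p, -q) ∈ A)
    (k : ℤ) (hk : 0 ≤ k) :
    ‖(x (k + 1) + y k) - (p + q)‖ ^ 2 ≤
      ‖(x k + y (k - 1)) - (p + q)‖ ^ 2
        - 2 * ⟪y k - q, x k - p⟫
        + 4 * ⟪y k - y (k - 1), x k - x (k + 1)⟫
        - ‖x (k + 1) - x k‖ ^ 2
        - 3 * ‖y k - y (k - 1)‖ ^ 2 := by
  set a := x k with ha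
  set b := x (k + 1) with hb
  set u := y k with hu
  set v := y (k - 1) with hv
  have hz : JA (a - u) = b + (u - v) := by
    rw [hb, hu, hv, ha, hrec k hk]; abel
  have hmono := hA.1 _ (hJ (a - u)) _ hpq
  rw [hz] at hmono
  simp only at hmono
  have key : (0 : ℝ) ≤ ⟪(a - u) - (b + (u - v)) - -q, (b + (u - v)) - p⟫ := hmono
  simp only [@norm_sub_sq_real, @norm_add_sq_real, inner_sub_left, inner_sub_right,
    inner_add_left, inner_add_right, inner_neg_left, inner_neg_right,
    real_inner_self_eq_norm_sq] at key ⊢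
  nlinarith [real_inner_comm a b, real_inner_comm a u, real_inner_comm a v,
    real_inner_comm a p, real_inner_comm a q, real_inner_comm b u, real_inner_comm b v,
    real_inner_comm b p, real_inner_comm b q, real_inner_comm u v, real_inner_comm u p,
    real_inner_comm u q, real_inner_comm v p, real_inner_comm v q, real_inner_comm p q]
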